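/- For every citation vector x₁ ≥ x₂ ≥ ... ≥ x_m, the h-index is not larger than the ν-index: h ≤ ν. -/
import Mathlib


open Finset

/-- Partial sum `S_k = x₁ + ⋯ + x_k` of a citation vector, with the natural
extension `S_k = S_m` for `k > m`. -/
def pSum {m : ℕ} (x : Fin m → ℕ) (k : ℕ) : ℕ :=
  ∑ i : Fin m, if (i : ℕ) < k then x i else 0

/-- `m*(j)`: the number of papers with at least `j` citations. -/
def mStar {m : ℕ} (x : Fin m → ℕ) (j : ℕ) : ℕ :=
  (Finset.univ.filter fun i => j ≤ x i).card

/-- The Hirsch `h`-index: `h = max {j ≥ 1 : m*(j) ≥ j}` (max ∅ = 0). -/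
noncomputable def hIndex {m : ℕ} (x : Fin m → ℕ) : ℕ :=
  sSup {j : ℕ | 1 ≤ j ∧ j ≤ mStar x j}

/-- The Egghe `g`-index: `g = max {1 ≤ k ≤ m : S_k ≥ k²}` (max ∅ = 0). -/
noncomputable def gIndex {m : ℕ} (x : Fin m → ℕ) : ℕ :=
  sSup {k : ℕ | 1 ≤ k ∧ k ≤ m ∧ k ^ 2 ≤ pSum x k}

/-- The unconstrained `g*`-index: `g* = max {k ≥ 1 : S_k ≥ k²}` (max ∅ = 0). -/
noncomputable def gStar {m : ℕ} (x : Fin m → ℕ) : ℕ :=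
  sSup {k : ℕ | 1 ≤ k ∧ k ^ 2 ≤ pSum x k}

/-- The `ν`-index: `ν = max {j ≥ 1 : Σ_{i : x_i ≥ j} x_i ≥ j²}` (max ∅ = 0). -/
noncomputable def nuIndex {m : ℕ} (x : Fin m → ℕ) : ℕ :=
  sSup {j : ℕ | 1 ≤ j ∧ j ^ 2 ≤ ∑ i ∈ Finset.univ.filter (fun i => j ≤ x i), x i}

/-- The tempered `ν̄`-index: `ν̄ = max {1 ≤ j ≤ m : Σ_{i : x_i ≥ j} x_i ≥ j²}` (max ∅ = 0). -/
noncomputable def nuBar {m : ℕ} (x : Fin m → ℕ) : ℕ :=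
  sSup {j : ℕ | 1 ≤ j ∧ j ≤ m ∧ j ^ 2 ≤ ∑ i ∈ Finset.univ.filter (fun i => j ≤ x i), x i}

/-- The parametric index `ν_α = max {j ≥ 1 : Σ_{i : x_i ≥ j} x_i^α ≥ j^(α+1)}` (max ∅ = 0),
with real powers. -/
noncomputable def nuAlpha {m : ℕ} (x : Fin m → ℕ) (α : ℝ) : ℕ :=
  sSup {j : ℕ | 1 ≤ j ∧
    (j : ℝ) ^ (α + 1) ≤ ∑ i ∈ Finset.univ.filter (fun i => j ≤ x i), (x i : ℝ) ^ α}

/-- Extension of a finite citation vector by fictitious zeros. -/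
def extByZero {m : ℕ} (x : Fin m → ℕ) (i : ℕ) : ℕ :=
  if h : i < m then x ⟨i, h⟩ else 0

theorem stmt5 {m : ℕ} (hm : 1 ≤ m) (x : Fin m → ℕ) (hx : Antitone x) :
    hIndex x ≤ nuIndex x := by
  unfold hIndex nuIndex
  set H := {j : ℕ | 1 ≤ j ∧ j ≤ mStar x j} with hH
  set N := {j : ℕ | 1 ≤ j ∧ j ^ 2 ≤ ∑ i ∈ Finset.univ.filter (fun i => j ≤ x i), x i} with hN
  have hsub : H ⊆ N := by
    rintro j ⟨hj1, hj2⟩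
    refine ⟨hj1, ?_⟩
    calc j ^ 2 = j * j := sq j
      _ ≤ mStar x j * j := Nat.mul_le_mul_right _ hj2
      _ = ∑ i ∈ Finset.univ.filter (fun i => j ≤ x i), j := by
          rw [Finset.sum_const, mStar, smul_eq_mul]
      _ ≤ ∑ i ∈ Finset.univ.filter (fun i => j ≤ x i), x i := by
          exact Finset.sum_le_sum fun i hi => (Finset.mem_filter.mp hi).2
  have hbdd : BddAbove N := by
    refine ⟨∑ i : Fin m, x i, fun j hj => ?_⟩
    obtain ⟨hj1, hj2⟩ := hj
    calc j ≤ j ^ 2 := Nat.le_self_pow (by norm_num) j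
      _ ≤ ∑ i ∈ Finset.univ.filter (fun i => j ≤ x i), x i := hj2
      _ ≤ ∑ i : Fin m, x i := Finset.sum_le_sum_of_subset (Finset.filter_subset _ _)
  rcases Set.eq_empty_or_nonempty H with h | h
  · rw [h]; simp [sSup_empty]
  · exact csSup_le_csSup hbdd h hsub
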